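/- Let U₁ ∈ ℝ^{d1×r1} and U₂ ∈ ℝ^{d2×r2} have orthonormal columns, let T ≥ 1, and for t = 1,…,T let A_t, B_t ∈ ℝ^{r1×r2}, and set M_t = U₁A_tU₂ᵀ ∈ ℝ^{d1×d2} and N_t = U₁B_tU₂ᵀ ∈ ℝ^{d1×d2}. Then ‖Σ_{t=1}^{T} mat₁(M_t ⊗ N_t)‖₂ = ‖Σ_{t=1}^{T} mat₁(A_t ⊗ B_t)‖₂. -/

import Mathlib

open Matrix RealInnerProductSpace

/-- The spectral norm (largest singular value) of a real matrix, i.e. the operator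
norm of the associated linear map between Euclidean spaces. -/
noncomputable def specNorm {m n : Type*} [Fintype m] [Fintype n] [DecidableEq n]
    (A : Matrix m n ℝ) : ℝ :=
  ‖LinearMap.toContinuousLinearMap (Matrix.toEuclideanLin A)‖

/-- The mode-1 matricization mat₁(A ⊗ B) of the order-4 tensor product of two matrices:
its rows are indexed by the row index of A, its columns by triples (j1, i2, j2), with
entries A i1 j1 * B i2 j2. -/
def mat1Kron {d1 d2 e1 e2 : ℕ} (A : Matrix (Fin d1) (Fin d2) ℝ)
    (B : Matrix (Fin e1) (Fin e2) ℝ) :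
    Matrix (Fin d1) (Fin d2 × Fin e1 × Fin e2) ℝ :=
  fun i1 p => A i1 p.1 * B p.2.1 p.2.2

/-- The Frobenius norm of a real matrix. -/
noncomputable def frobNorm {a b : Type*} [Fintype a] [Fintype b] (A : Matrix a b ℝ) : ℝ :=
  Real.sqrt (∑ i, ∑ j, (A i j) ^ 2)

/-- The Frobenius inner product ⟨A, B⟩_F = tr(AᵀB) of two real matrices. -/
def frobInner {a b : Type*} [Fintype a] [Fintype b] (A B : Matrix a b ℝ) : ℝ :=
  ∑ i, ∑ j, A i j * B i j

lemma specNorm_transpose {m n : Type*} [Fintype m] [Fintype n] [DecidableEq m] [DecidableEq n]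
    (A : Matrix m n ℝ) : specNorm Aᵀ = specNorm A := by
  unfold specNorm
  have h : Aᵀ = Aᴴ := by ext i j; simp [Matrix.conjTranspose]
  rw [h, Matrix.toEuclideanLin_conjTranspose_eq_adjoint,
    LinearMap.adjoint_toContinuousLinearMap]
  exact LinearIsometryEquiv.norm_map ContinuousLinearMap.adjoint _

lemma specNorm_mul_left {m n k : Type*} [Fintype m] [Fintype n] [Fintype k]
    [DecidableEq m] [DecidableEq n] [DecidableEq k]
    (U : Matrix m n ℝ) (hU : Uᵀ * U = 1) (A : Matrix n k ℝ) :
    specNorm (U * A) = specNorm A := by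
  unfold specNorm
  have key : ∀ y : EuclideanSpace ℝ n, ‖Matrix.toEuclideanLin U y‖ = ‖y‖ := by
    intro y
    have h1 : Matrix.toEuclideanLin Uᴴ = LinearMap.adjoint (Matrix.toEuclideanLin U) :=
      Matrix.toEuclideanLin_conjTranspose_eq_adjoint U
    have h2 : (inner ℝ (Matrix.toEuclideanLin U y) (Matrix.toEuclideanLin U y) : ℝ)
        = inner ℝ y y := by
      rw [← LinearMap.adjoint_inner_right, ← h1]
      have : Uᴴ = Uᵀ := by ext i j; simp [Matrix.conjTranspose]
      rw [this]
      have : Matrix.toEuclideanLin Uᵀ (Matrix.toEuclideanLin U y)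
          = Matrix.toEuclideanLin (Uᵀ * U) y := by
        simp [Matrix.toEuclideanLin_apply, Matrix.mulVec_mulVec]
      rw [this, hU]
      simp [Matrix.toEuclideanLin_apply]
    have := congrArg Real.sqrt h2
    rwa [real_inner_self_eq_norm_sq, real_inner_self_eq_norm_sq,
      Real.sqrt_sq (norm_nonneg _), Real.sqrt_sq (norm_nonneg _)] at this
  have hcomp : ∀ x : EuclideanSpace ℝ k,
      Matrix.toEuclideanLin (U * A) x = Matrix.toEuclideanLin U (Matrix.toEuclideanLin A x) := by
    intro x; simp [Matrix.toEuclideanLin_apply, Matrix.mulVec_mulVec]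
  apply le_antisymm
  · apply ContinuousLinearMap.opNorm_le_bound _ (norm_nonneg _)
    intro x
    have : ‖LinearMap.toContinuousLinearMap (Matrix.toEuclideanLin (U * A)) x‖
        = ‖LinearMap.toContinuousLinearMap (Matrix.toEuclideanLin A) x‖ := by
      simp only [LinearMap.coe_toContinuousLinearMap']
      rw [hcomp, key]
    rw [this]
    exact ContinuousLinearMap.le_opNorm _ _
  · apply ContinuousLinearMap.opNorm_le_bound _ (norm_nonneg _)
    intro x
    have : ‖LinearMap.toContinuousLinearMap (Matrix.toEuclideanLin A) x‖
        = ‖LinearMap.toContinuousLinearMap (Matrix.toEuclideanLin (U * A)) x‖ := by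
      simp only [LinearMap.coe_toContinuousLinearMap']
      rw [hcomp, key]
    rw [this]
    exact ContinuousLinearMap.le_opNorm _ _

lemma specNorm_mul_right {m n k : Type*} [Fintype m] [Fintype n] [Fintype k]
    [DecidableEq m] [DecidableEq n] [DecidableEq k]
    (V : Matrix k n ℝ) (hV : Vᵀ * V = 1) (A : Matrix m n ℝ) :
    specNorm (A * Vᵀ) = specNorm A := by
  rw [← specNorm_transpose (A * Vᵀ), Matrix.transpose_mul, Matrix.transpose_transpose,
    specNorm_mul_left V hV, specNorm_transpose]

lemma mat1Kron_mul_left {d0 d1 d2 e1 e2 : ℕ} (X : Matrix (Fin d0) (Fin d1) ℝ)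
    (C : Matrix (Fin d1) (Fin d2) ℝ) (N : Matrix (Fin e1) (Fin e2) ℝ) :
    mat1Kron (X * C) N = X * mat1Kron C N := by
  ext i p
  simp [mat1Kron, Matrix.mul_apply, Finset.sum_mul, mul_assoc]

lemma mat1Kron_mul_V {d1 d2 r1 r2 a1 : ℕ}
    (U1 : Matrix (Fin d1) (Fin r1) ℝ) (U2 : Matrix (Fin d2) (Fin r2) ℝ)
    (A : Matrix (Fin a1) (Fin r2) ℝ) (B : Matrix (Fin r1) (Fin r2) ℝ)
    (V : Matrix (Fin d2 × Fin d1 × Fin d2) (Fin r2 × Fin r1 × Fin r2) ℝ)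
    (hV : V = fun p q => U2 p.1 q.1 * U1 p.2.1 q.2.1 * U2 p.2.2 q.2.2) :
    mat1Kron A B * Vᵀ = mat1Kron (A * U2ᵀ) (U1 * B * U2ᵀ) := by
  have hVe : ∀ p q, V p q = U2 p.1 q.1 * U1 p.2.1 q.2.1 * U2 p.2.2 q.2.2 := fun p q => by rw [hV]
  ext i p
  simp only [mat1Kron, Matrix.mul_apply, Matrix.transpose_apply, Fintype.sum_prod_type, hVe]
  simp_rw [Finset.sum_mul, Finset.mul_sum]
  apply Finset.sum_congr rfl; intro b _
  rw [Finset.sum_comm]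
  apply Finset.sum_congr rfl; intro c _
  apply Finset.sum_congr rfl; intro d _
  ring

lemma Vorth {d1 d2 r1 r2 : ℕ}
    (U1 : Matrix (Fin d1) (Fin r1) ℝ) (U2 : Matrix (Fin d2) (Fin r2) ℝ)
    (hU1 : U1ᵀ * U1 = 1) (hU2 : U2ᵀ * U2 = 1)
    (V : Matrix (Fin d2 × Fin d1 × Fin d2) (Fin r2 × Fin r1 × Fin r2) ℝ)
    (hV : V = fun p q => U2 p.1 q.1 * U1 p.2.1 q.2.1 * U2 p.2.2 q.2.2) :
    Vᵀ * V = 1 := by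
  have hVe : ∀ p q, V p q = U2 p.1 q.1 * U1 p.2.1 q.2.1 * U2 p.2.2 q.2.2 := fun p q => by rw [hV]
  have h1 : ∀ a b, (∑ j, U1 j a * U1 j b) = if a = b then (1:ℝ) else 0 := by
    intro a b
    have := congrFun (congrFun hU1 a) b
    simpa [Matrix.mul_apply, Matrix.one_apply, Matrix.transpose_apply] using this
  have h2 : ∀ a b, (∑ j, U2 j a * U2 j b) = if a = b then (1:ℝ) else 0 := by
    intro a b
    have := congrFun (congrFun hU2 a) b
    simpa [Matrix.mul_apply, Matrix.one_apply, Matrix.transpose_apply] using this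
  ext q q'
  simp only [Matrix.mul_apply, Matrix.transpose_apply, Matrix.one_apply,
    Fintype.sum_prod_type, hVe]
  have key : ∀ (j1 : Fin d2) (i2 : Fin d1) (j2 : Fin d2),
      (U2 j1 q.1 * U1 i2 q.2.1 * U2 j2 q.2.2) * (U2 j1 q'.1 * U1 i2 q'.2.1 * U2 j2 q'.2.2)
      = (U2 j1 q.1 * U2 j1 q'.1) * ((U1 i2 q.2.1 * U1 i2 q'.2.1) * (U2 j2 q.2.2 * U2 j2 q'.2.2)) := by
    intros; ring
  simp_rw [key, ← Finset.mul_sum, ← Finset.sum_mul, h1, h2]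
  rcases q with ⟨a1, a2, a3⟩; rcases q' with ⟨b1, b2, b3⟩
  simp only [Prod.mk.injEq]
  split_ifs <;> simp_all

/-- with U₁, U₂ having orthonormal columns and M_t = U₁A_tU₂ᵀ,
N_t = U₁B_tU₂ᵀ, the spectral norm of Σ_t mat₁(M_t ⊗ N_t) equals that of
Σ_t mat₁(A_t ⊗ B_t). -/
theorem stmt7 (d1 d2 r1 r2 T : ℕ) (hT : 1 ≤ T)
    (U1 : Matrix (Fin d1) (Fin r1) ℝ) (U2 : Matrix (Fin d2) (Fin r2) ℝ)
    (hU1 : U1ᵀ * U1 = 1) (hU2 : U2ᵀ * U2 = 1)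
    (A B : Fin T → Matrix (Fin r1) (Fin r2) ℝ) :
    specNorm (∑ t, mat1Kron (U1 * A t * U2ᵀ) (U1 * B t * U2ᵀ)) =
      specNorm (∑ t, mat1Kron (A t) (B t)) := by
  set V : Matrix (Fin d2 × Fin d1 × Fin d2) (Fin r2 × Fin r1 × Fin r2) ℝ :=
    fun p q => U2 p.1 q.1 * U1 p.2.1 q.2.1 * U2 p.2.2 q.2.2 with hV
  have hVo : Vᵀ * V = 1 := Vorth U1 U2 hU1 hU2 V hV
  have hfact : ∀ t, mat1Kron (U1 * A t * U2ᵀ) (U1 * B t * U2ᵀ)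
      = U1 * (mat1Kron (A t) (B t) * Vᵀ) := by
    intro t
    have h1 : U1 * A t * U2ᵀ = U1 * (A t * U2ᵀ) := by rw [Matrix.mul_assoc]
    rw [h1, mat1Kron_mul_left, mat1Kron_mul_V U1 U2 (A t) (B t) V hV]
  have hsum : (∑ t, mat1Kron (U1 * A t * U2ᵀ) (U1 * B t * U2ᵀ))
      = U1 * (∑ t, mat1Kron (A t) (B t)) * Vᵀ := by
    simp_rw [hfact]
    rw [← Matrix.mul_sum, ← Matrix.sum_mul, Matrix.mul_assoc]
  rw [hsum, Matrix.mul_assoc, specNorm_mul_left U1 hU1, specNorm_mul_right V hVo]
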